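/- Let C ⊆ Ω be closed convex subsets of ℝ^d with nonempty interiors. Suppose (i) f : Ω → ℝ is convex on C and differentiable on int(Ω); (ii) φ : Ω → ℝ is of Legendre type and continuous on Ω; (iii) f is L-smooth with respect to a norm ‖·‖ on C ∩ int(Ω) for some L > 0; (iv) φ is α-strongly convex with respect to ‖·‖ on C for some α > 0. Let (θ_t) be mirror descent iterates θ_{t+1} = argmin_{θ ∈ C} ( η_t⟨∇f(θ_t), θ⟩ + D_φ(θ, θ_t) ) initialized at θ_0 ∈ C ∩ int(Ω) with step sizes η_t ∈ (0, α/L] (all iterates remain in C ∩ int(Ω), so the Bregman divergences are well-defined). Then for every z ∈ C and every integer T ≥ 1, f(θ_T) − f(z) ≤ ( D_φ(z, θ_0) − D_φ(z, θ_T) ) / ( Σ_{t=0}^{T−1} η_t ). -/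

import Mathlib

open Finset Filter
open scoped RealInnerProductSpace

section MDHelpers

variable {E : Type*} [NormedAddCommGroup E] [InnerProductSpace ℝ E] [CompleteSpace E]

/-- Derivative of a function along a line, expressed via the gradient. -/
lemma md_line_hasDerivAt (f : E → ℝ) (x v : E) (t₀ : ℝ)
    (hf : DifferentiableAt ℝ f (x + t₀ • v)) :
    HasDerivAt (fun t : ℝ => f (x + t • v)) ⟪gradient f (x + t₀ • v), v⟫ t₀ := by
  have h1 : HasDerivAt (fun t : ℝ => x + t • v) v t₀ := by
    simpa using ((hasDerivAt_id t₀).smul_const v).const_add x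
  have h2 := (hf.hasGradientAt.hasFDerivAt).comp_hasDerivAt t₀ h1
  have h3 : HasDerivAt (fun t : ℝ => f (x + t • v))
      (((InnerProductSpace.toDual ℝ E) (gradient f (x + t₀ • v))) v) t₀ := h2
  simpa [InnerProductSpace.toDual_apply_apply] using h3

/-- If the one-sided slopes are bounded above by `c`, so is the derivative. -/
lemma md_deriv_le_slope {h : ℝ → ℝ} {s c : ℝ} (hd : HasDerivAt h s 0)
    (hb : ∀ lam : ℝ, lam ∈ Set.Ioc (0:ℝ) 1 → h lam - h 0 ≤ lam * c) : s ≤ c := by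
  have h1 : Tendsto (slope h 0) (nhdsWithin 0 (Set.Ioi 0)) (nhds s) :=
    (hasDerivAt_iff_tendsto_slope.1 hd).mono_left
      (nhdsWithin_mono _ (fun x hx => ne_of_gt hx))
  refine le_of_tendsto h1 ?_
  filter_upwards [Ioo_mem_nhdsGT_of_mem
    (Set.mem_Ico.2 ⟨le_refl (0:ℝ), one_pos⟩)] with lam hl
  have hlam0 : (0:ℝ) < lam := hl.1
  have := hb lam ⟨hl.1, le_of_lt hl.2⟩
  have hs : slope h 0 lam = (h lam - h 0) / lam := by
    simp [slope_def_field]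
  rw [hs, div_le_iff₀ hlam0]
  linarith [this]

/-- If the one-sided slopes are bounded below by `c`, so is the derivative. -/
lemma md_slope_le_deriv {h : ℝ → ℝ} {s c : ℝ} (hd : HasDerivAt h s 0)
    (hb : ∀ lam : ℝ, lam ∈ Set.Ioc (0:ℝ) 1 → lam * c ≤ h lam - h 0) : c ≤ s := by
  have : -s ≤ -c := by
    refine md_deriv_le_slope (hd.neg) ?_
    intro lam hlam
    have := hb lam hlam
    show -h lam - -h 0 ≤ lam * -c
    rw [mul_neg]
    linarith
  linarith

end MDHelpers

set_option maxHeartbeats 1600000 in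
/-- **Basic inequality for mirror descent.**
Let `C ⊆ Om` be closed convex subsets of `ℝ^d` with nonempty interiors, `f` convex on `C`
and differentiable on `int Om`, `φ` of Legendre type (essentially smooth: differentiable on
`int Om` with gradient blowing up at the boundary; and essentially strictly convex: strictly
convex on every convex subset of the set where its subdifferential is nonempty) and
continuous on `Om`; `f` is `L`-smooth w.r.t. a norm `N` on `C ∩ int Om` (expressed via the
dual-norm inequality) and `φ` is `α`-strongly convex w.r.t. `N` on `C`. For mirror descent
iterates (minimizers of `η t * ⟪∇f θt, ·⟫ + D_φ(·, θt)` over `C`, remaining in `C ∩ int Om`)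
with step sizes `η t ∈ (0, α/L]`, for any `z ∈ C` and `T ≥ 1`,
`f (θ T) - f z ≤ (D_φ(z, θ 0) - D_φ(z, θ T)) / Σ_{t<T} η t`. -/
theorem md_basic_inequality {d : ℕ}
    (C Om : Set (EuclideanSpace ℝ (Fin d)))
    (hCOm : C ⊆ Om) (hCclosed : IsClosed C) (hCconv : Convex ℝ C)
    (hOmclosed : IsClosed Om) (hOmconv : Convex ℝ Om)
    (hCint : (interior C).Nonempty) (hOmint : (interior Om).Nonempty)
    (f φ : EuclideanSpace ℝ (Fin d) → ℝ)
    (hf_conv : ConvexOn ℝ C f)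
    (hf_diff : ∀ x ∈ interior Om, DifferentiableAt ℝ f x)
    -- a norm `N` on ℝ^d
    (N : EuclideanSpace ℝ (Fin d) → ℝ)
    (hN_pos : ∀ x, x ≠ 0 → 0 < N x) (hN_zero : N 0 = 0)
    (hN_add : ∀ x y, N (x + y) ≤ N x + N y)
    (hN_smul : ∀ (c : ℝ) x, N (c • x) = |c| * N x)
    -- `φ` is continuous on `Om`, convex, and of Legendre type
    (hφ_cont : ContinuousOn φ Om)
    (hφ_conv : ConvexOn ℝ Om φ)
    (hφ_diff : ∀ x ∈ interior Om, DifferentiableAt ℝ φ x)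
    (hφ_ess_smooth : ∀ (x : ℕ → EuclideanSpace ℝ (Fin d)) (y : EuclideanSpace ℝ (Fin d)),
      (∀ k, x k ∈ interior Om) → y ∈ frontier Om → Tendsto x atTop (nhds y) →
        Tendsto (fun k => ‖gradient φ (x k)‖) atTop atTop)
    (hφ_ess_strict : ∀ s ⊆ {x ∈ Om | ∃ g : EuclideanSpace ℝ (Fin d),
        ∀ y ∈ Om, φ x + ⟪g, y - x⟫ ≤ φ y}, Convex ℝ s → StrictConvexOn ℝ s φ)
    -- `f` is `L`-smooth w.r.t. `N` on `C ∩ int Om`, `φ` is `α`-strongly convex w.r.t. `N` on `C`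
    (L α : ℝ) (hL : 0 < L) (hα : 0 < α)
    (hf_smooth : ∀ x ∈ C ∩ interior Om, ∀ y ∈ C ∩ interior Om,
      ∀ u : EuclideanSpace ℝ (Fin d),
        ⟪gradient f x - gradient f y, u⟫ ≤ L * N (x - y) * N u)
    (hφ_strong : ∀ x ∈ C ∩ interior Om, ∀ y ∈ C,
      φ x + ⟪gradient φ x, y - x⟫ + α / 2 * N (y - x) ^ 2 ≤ φ y)
    -- Bregman divergence of `φ`
    (D : EuclideanSpace ℝ (Fin d) → EuclideanSpace ℝ (Fin d) → ℝ)
    (hD : ∀ u v, D u v = φ u - φ v - ⟪gradient φ v, u - v⟫)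
    -- mirror descent iterates with step sizes `η t ∈ (0, α/L]`
    (η : ℕ → ℝ) (hη : ∀ t, 0 < η t ∧ η t ≤ α / L)
    (θ : ℕ → EuclideanSpace ℝ (Fin d))
    (hθmem : ∀ t, θ t ∈ C ∩ interior Om)
    (hupd : ∀ t, ∀ w ∈ C,
      η t * ⟪gradient f (θ t), θ (t + 1)⟫ + D (θ (t + 1)) (θ t) ≤
        η t * ⟪gradient f (θ t), w⟫ + D w (θ t))
    (z : EuclideanSpace ℝ (Fin d)) (hz : z ∈ C) (T : ℕ) (hT : 1 ≤ T) :
    f (θ T) - f z ≤ (D z (θ 0) - D z (θ T)) / (∑ t ∈ Finset.range T, η t) := by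
  have hN_nonneg : ∀ x, 0 ≤ N x := by
    intro x
    rcases eq_or_ne x 0 with h | h
    · simp [h, hN_zero]
    · exact le_of_lt (hN_pos x h)
  have hIntConv : Convex ℝ (interior Om) := hOmconv.interior
  have hCI : Convex ℝ (C ∩ interior Om) := hCconv.inter hIntConv
  -- gradient inequality for the convex function f
  have key_convex : ∀ x ∈ C ∩ interior Om, ∀ w ∈ C,
      ⟪gradient f x, w - x⟫ ≤ f w - f x := by
    intro x hx w hw
    have hdiff : DifferentiableAt ℝ f (x + (0:ℝ) • (w - x)) := by
      simpa using hf_diff x hx.2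
    have hder := md_line_hasDerivAt f x (w - x) 0 hdiff
    have hder' : HasDerivAt (fun t : ℝ => f (x + t • (w - x))) ⟪gradient f x, w - x⟫ 0 := by
      simpa using hder
    refine md_deriv_le_slope hder' ?_
    intro lam hlam
    rw [show x + (0:ℝ) • (w - x) = x by simp]
    have hmem : x + lam • (w - x) = (1 - lam) • x + lam • w := by module
    have hcomb := hf_conv.2 hx.1 hw (by linarith [hlam.2] : (0:ℝ) ≤ 1 - lam)
      (le_of_lt hlam.1) (by ring)
    rw [hmem]
    simp only [smul_eq_mul] at hcomb ⊢
    nlinarith [hcomb]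
  -- descent lemma from L-smoothness
  have descent : ∀ x ∈ C ∩ interior Om, ∀ y ∈ C ∩ interior Om,
      f y ≤ f x + ⟪gradient f x, y - x⟫ + L / 2 * N (y - x) ^ 2 := by
    intro x hx y hy
    set v := y - x with hv
    have hseg : ∀ t ∈ Set.Icc (0:ℝ) 1, x + t • v ∈ C ∩ interior Om := by
      intro t ht
      have : (1 - t) • x + t • y ∈ C ∩ interior Om :=
        hCI hx hy (by linarith [ht.2]) ht.1 (by ring)
      have he : x + t • v = (1 - t) • x + t • y := by rw [hv]; module
      rw [he]; exact this
    set ψ : ℝ → ℝ := fun t =>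
      f x + t * ⟪gradient f x, v⟫ + L / 2 * t ^ 2 * N v ^ 2 - f (x + t • v) with hψ
    have hψd : ∀ t ∈ Set.Icc (0:ℝ) 1, HasDerivAt ψ
        (⟪gradient f x, v⟫ + L * t * N v ^ 2 - ⟪gradient f (x + t • v), v⟫) t := by
      intro t ht
      have h1 := md_line_hasDerivAt f x v t (hf_diff _ (hseg t ht).2)
      have ha : HasDerivAt (fun s : ℝ => s * ⟪gradient f x, v⟫) ⟪gradient f x, v⟫ t := by
        simpa using (hasDerivAt_id t).mul_const ⟪gradient f x, v⟫
      have hb : HasDerivAt (fun s : ℝ => L / 2 * s ^ 2 * N v ^ 2) (L * t * N v ^ 2) t := by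
        have := ((hasDerivAt_pow 2 t).const_mul (L / 2)).mul_const (N v ^ 2)
        exact this.congr_deriv (by ring)
      have := (((hasDerivAt_const t (f x)).add ha).add hb).sub h1
      exact this.congr_deriv (by rw [zero_add])
    have hmono : MonotoneOn ψ (Set.Icc (0:ℝ) 1) := by
      apply monotoneOn_of_deriv_nonneg (convex_Icc 0 1)
      · exact fun t ht => (hψd t ht).continuousAt.continuousWithinAt
      · intro t ht
        rw [interior_Icc] at ht
        exact ((hψd t ⟨le_of_lt ht.1, le_of_lt ht.2⟩).differentiableAt).differentiableWithinAt
      · intro t ht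
        rw [interior_Icc] at ht
        have ht' : t ∈ Set.Icc (0:ℝ) 1 := ⟨le_of_lt ht.1, le_of_lt ht.2⟩
        rw [(hψd t ht').deriv]
        have hsm := hf_smooth (x + t • v) (hseg t ht') x hx v
        have he1 : x + t • v - x = t • v := by module
        have he2 : N (t • v) = t * N v := by
          rw [hN_smul, abs_of_pos ht.1]
        rw [he1, he2] at hsm
        rw [inner_sub_left] at hsm
        nlinarith [hsm]
    have h01 := hmono (Set.mem_Icc.2 ⟨le_refl (0:ℝ), zero_le_one⟩)
      (Set.mem_Icc.2 ⟨zero_le_one, le_refl (1:ℝ)⟩) zero_le_one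
    have hψ0 : ψ 0 = 0 := by simp [hψ]
    have hψ1 : ψ 1 = f x + ⟪gradient f x, v⟫ + L / 2 * N v ^ 2 - f y := by
      have hxy : x + (1:ℝ) • v = y := by rw [hv]; module
      simp only [hψ]
      rw [hxy]
      ring
    rw [hψ0, hψ1] at h01
    linarith
  -- first-order optimality condition of the mirror descent update
  have hopt : ∀ t, ∀ w ∈ C,
      0 ≤ η t * ⟪gradient f (θ t), w - θ (t+1)⟫ +
        ⟪gradient φ (θ (t+1)) - gradient φ (θ t), w - θ (t+1)⟫ := by
    intro t w hw
    set x := θ t with hx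
    set x' := θ (t+1) with hx'
    set v := w - x' with hv
    set h : ℝ → ℝ := fun lam =>
      η t * ⟪gradient f x, x' + lam • v⟫ + D (x' + lam • v) x with hh
    have hφdiff : DifferentiableAt ℝ φ (x' + (0:ℝ) • v) := by
      simpa using hφ_diff x' (hθmem (t+1)).2
    have hφd : HasDerivAt (fun lam : ℝ => φ (x' + lam • v)) ⟪gradient φ x', v⟫ 0 := by
      simpa using md_line_hasDerivAt φ x' v 0 hφdiff
    have hlin1 : HasDerivAt (fun lam : ℝ => η t * ⟪gradient f x, x' + lam • v⟫)
        (η t * ⟪gradient f x, v⟫) 0 := by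
      have he : (fun lam : ℝ => η t * ⟪gradient f x, x' + lam • v⟫) =
          fun lam : ℝ => η t * ⟪gradient f x, x'⟫ + η t * ⟪gradient f x, v⟫ * lam := by
        funext lam
        rw [inner_add_right, real_inner_smul_right]
        ring
      rw [he]
      simpa using ((hasDerivAt_id (0:ℝ)).const_mul
        (η t * ⟪gradient f x, v⟫)).const_add (η t * ⟪gradient f x, x'⟫)
    have hlin2 : HasDerivAt (fun lam : ℝ => ⟪gradient φ x, (x' + lam • v) - x⟫)
        ⟪gradient φ x, v⟫ 0 := by
      have he : (fun lam : ℝ => ⟪gradient φ x, (x' + lam • v) - x⟫) =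
          fun lam : ℝ => ⟪gradient φ x, x' - x⟫ + ⟪gradient φ x, v⟫ * lam := by
        funext lam
        have : (x' + lam • v) - x = (x' - x) + lam • v := by module
        rw [this, inner_add_right, real_inner_smul_right]
        ring
      rw [he]
      simpa using ((hasDerivAt_id (0:ℝ)).const_mul
        ⟪gradient φ x, v⟫).const_add ⟪gradient φ x, x' - x⟫
    have hhd : HasDerivAt h
        (η t * ⟪gradient f x, v⟫ + (⟪gradient φ x', v⟫ - ⟪gradient φ x, v⟫)) 0 := by
      have he : h = fun lam : ℝ => η t * ⟪gradient f x, x' + lam • v⟫ +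
          ((φ (x' + lam • v) - φ x) - ⟪gradient φ x, (x' + lam • v) - x⟫) := by
        funext lam
        rw [hh]
        simp only [hD]
      rw [he]
      exact hlin1.add ((hφd.sub_const (φ x)).sub hlin2)
    have hkey : (0:ℝ) ≤ η t * ⟪gradient f x, v⟫ +
        (⟪gradient φ x', v⟫ - ⟪gradient φ x, v⟫) := by
      refine md_slope_le_deriv hhd ?_
      intro lam hlam
      have hmemC : x' + lam • v ∈ C := by
        have hmm : (1 - lam) • x' + lam • w ∈ C :=
          hCconv (hθmem (t+1)).1 hw (by linarith [hlam.2]) (le_of_lt hlam.1) (by ring)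
        have he : x' + lam • v = (1 - lam) • x' + lam • w := by rw [hv]; module
        rw [he]; exact hmm
      have hud := hupd t (x' + lam • v) hmemC
      have hh0 : h 0 = η t * ⟪gradient f x, x'⟫ + D x' x := by
        simp [hh]
      have hhl : h lam = η t * ⟪gradient f x, x' + lam • v⟫ + D (x' + lam • v) x := rfl
      rw [hh0, hhl, mul_zero]
      linarith [hud]
    have hinner : ⟪gradient φ x' - gradient φ x, v⟫ =
        ⟪gradient φ x', v⟫ - ⟪gradient φ x, v⟫ := inner_sub_left _ _ _
    rw [hinner]
    linarith [hkey]
  -- strong convexity lower bound on the divergence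
  have hDlow : ∀ u ∈ C ∩ interior Om, ∀ w ∈ C,
      α / 2 * N (w - u) ^ 2 ≤ D w u := by
    intro u hu w hw
    have := hφ_strong u hu w hw
    rw [hD]
    linarith
  -- per-step inequality
  have step : ∀ t, η t * (f (θ (t+1)) - f z) ≤ D z (θ t) - D z (θ (t+1)) := by
    intro t
    have hx := hθmem t
    have hx' := hθmem (t+1)
    have ha := descent (θ t) hx (θ (t+1)) hx'
    have hb := key_convex (θ t) hx z hz
    have hc := hopt t z hz
    have hthree : ⟪gradient φ (θ (t+1)) - gradient φ (θ t), z - θ (t+1)⟫ =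
        D z (θ t) - D z (θ (t+1)) - D (θ (t+1)) (θ t) := by
      simp only [hD, inner_sub_left, inner_sub_right]
      ring
    have hd := hDlow (θ t) hx (θ (t+1)) hx'.1
    have hinner1 : ⟪gradient f (θ t), θ (t+1) - θ t⟫ - ⟪gradient f (θ t), z - θ t⟫ =
        ⟪gradient f (θ t), θ (t+1) - z⟫ := by
      rw [← inner_sub_right]
      congr 1
      module
    have hinner2 : ⟪gradient f (θ t), z - θ (t+1)⟫ =
        - ⟪gradient f (θ t), θ (t+1) - z⟫ := by
      rw [← inner_neg_right]
      congr 1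
      module
    have h1 : f (θ (t+1)) - f z ≤ ⟪gradient f (θ t), θ (t+1) - z⟫ +
        L / 2 * N (θ (t+1) - θ t) ^ 2 := by linarith
    have h2 := mul_le_mul_of_nonneg_left h1 (le_of_lt (hη t).1)
    rw [hthree, hinner2] at hc
    set P := ⟪gradient f (θ t), θ (t+1) - z⟫ with hPdef
    set Q := N (θ (t+1) - θ t) ^ 2 with hQdef
    set A := D z (θ t) with hAdef
    set B := D z (θ (t+1)) with hBdef
    set Dd := D (θ (t+1)) (θ t) with hDddef
    have hQ : (0:ℝ) ≤ Q := sq_nonneg _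
    have hηL : η t * L ≤ α := (le_div_iff₀ hL).1 (hη t).2
    have hc' : η t * P ≤ A - B - Dd := by nlinarith [hc]
    have h2' : η t * (f (θ (t+1)) - f z) ≤ η t * P + η t * (L / 2) * Q := by
      nlinarith [h2]
    have h5 : η t * (L / 2) * Q ≤ α / 2 * Q := by
      nlinarith [mul_nonneg (sub_nonneg.2 hηL) hQ]
    linarith
  -- monotonicity of the objective values
  have mono : ∀ t, f (θ (t+1)) ≤ f (θ t) := by
    intro t
    have hu := hupd t (θ t) (hθmem t).1
    have hDxx : D (θ t) (θ t) = 0 := by simp [hD]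
    rw [hDxx] at hu
    have hd := hDlow (θ t) (hθmem t) (θ (t+1)) (hθmem (t+1)).1
    have ha := descent (θ t) (hθmem t) (θ (t+1)) (hθmem (t+1))
    have hinner : ⟪gradient f (θ t), θ (t+1) - θ t⟫ =
        ⟪gradient f (θ t), θ (t+1)⟫ - ⟪gradient f (θ t), θ t⟫ := by
      rw [← inner_sub_right]
    have hQ : (0:ℝ) ≤ N (θ (t+1) - θ t) ^ 2 := sq_nonneg _
    have hηL : η t * L ≤ α := (le_div_iff₀ hL).1 (hη t).2
    have hηpos := (hη t).1
    -- η * ⟪g, Δ⟫ ≤ -D(x',x) ≤ -α/2 N Δ²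
    have h3 : η t * ⟪gradient f (θ t), θ (t+1) - θ t⟫ ≤
        - (α / 2 * N (θ (t+1) - θ t) ^ 2) := by
      rw [hinner]
      nlinarith [hu, hd]
    have h4 := mul_le_mul_of_nonneg_left ha (le_of_lt hηpos)
    nlinarith [h3, h4, mul_nonneg (sub_nonneg.2 hηL) hQ]
  have hanti : Antitone (fun t => f (θ t)) := antitone_nat_of_succ_le mono
  -- summation and telescoping
  have hsum : ∀ t ∈ Finset.range T, η t * (f (θ T) - f z) ≤ D z (θ t) - D z (θ (t+1)) := by
    intro t ht
    have h2 : f (θ T) ≤ f (θ (t+1)) := hanti (Nat.succ_le_of_lt (Finset.mem_range.1 ht))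
    have := step t
    have h3 : η t * (f (θ T) - f z) ≤ η t * (f (θ (t+1)) - f z) :=
      mul_le_mul_of_nonneg_left (by linarith) (le_of_lt (hη t).1)
    linarith
  have hsum2 := Finset.sum_le_sum hsum
  rw [Finset.sum_range_sub' (fun t => D z (θ t)) T] at hsum2
  have hS : (0:ℝ) < ∑ t ∈ Finset.range T, η t :=
    Finset.sum_pos (fun t _ => (hη t).1) (Finset.nonempty_range_iff.2 (by omega))
  rw [le_div_iff₀ hS]
  calc (f (θ T) - f z) * ∑ t ∈ Finset.range T, η t
      = ∑ t ∈ Finset.range T, η t * (f (θ T) - f z) := by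
        rw [mul_comm, Finset.sum_mul]
    _ ≤ D z (θ 0) - D z (θ T) := hsum2
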